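/- For all integers n ≥ 1, the derivative of the Hendriksen–van Rossum polynomial satisfies d/dz P_n(z; α, β) = n · P_{n−1}(z; α+1, β). -/

import Mathlib

open Finset

noncomputable def poch (a : ℝ) (k : ℕ) : ℝ := ∏ i ∈ Finset.range k, (a + i)

noncomputable def HR (n : ℕ) (α β : ℝ) (z : ℝ) : ℝ :=
  (poch β n / poch (α + 1) n) *
    ∑ k ∈ Finset.range (n + 1),
      (poch (-(n : ℝ)) k * poch (α + 1) k) / ((k.factorial : ℝ) * poch (1 - β - (n : ℝ)) k) * z ^ k

lemma poch_succ (a : ℝ) (k : ℕ) : poch a (k + 1) = poch a k * (a + k) :=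
  Finset.prod_range_succ _ _

lemma poch_succ' (a : ℝ) (k : ℕ) : poch a (k + 1) = a * poch (a + 1) k := by
  unfold poch
  rw [Finset.prod_range_succ']
  rw [mul_comm]
  congr 1
  · push_cast; ring
  · apply Finset.prod_congr rfl
    intro i _
    push_cast; ring

lemma poch_ne_zero (a : ℝ) (k : ℕ) (h : ∀ i < k, a + (i : ℝ) ≠ 0) : poch a k ≠ 0 := by
  unfold poch
  exact Finset.prod_ne_zero_iff.mpr (fun i hi => h i (Finset.mem_range.mp hi))

theorem hr_derivative (n : ℕ) (hn : 1 ≤ n) (α β : ℝ)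
    (hβ : ∀ j < n, β + (j : ℝ) ≠ 0)
    (hα : ∀ j < n + 1, α + 1 + (j : ℝ) ≠ 0)
    (hd : ∀ j < n, 1 - β - (n : ℝ) + (j : ℝ) ≠ 0)
    (hd' : ∀ j < n - 1, 1 - β - ((n : ℝ) - 1) + (j : ℝ) ≠ 0) :
    ∀ z : ℝ, deriv (fun t => HR n α β t) z = (n : ℝ) * HR (n - 1) (α + 1) β z := by
  obtain ⟨m, rfl⟩ : ∃ m, n = m + 1 := ⟨n - 1, (Nat.succ_pred_eq_of_pos hn).symm⟩
  intro z
  have key : HasDerivAt (fun t => HR (m + 1) α β t)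
      ((poch β (m + 1) / poch (α + 1) (m + 1)) *
        ∑ k ∈ Finset.range (m + 2),
          (poch (-((m + 1 : ℕ) : ℝ)) k * poch (α + 1) k) /
            ((k.factorial : ℝ) * poch (1 - β - ((m + 1 : ℕ) : ℝ)) k) *
            ((k : ℝ) * z ^ (k - 1))) z := by
    unfold HR
    exact HasDerivAt.const_mul _
      (HasDerivAt.fun_sum (fun k _ => (hasDerivAt_pow k z).const_mul _))
  rw [key.deriv]
  rw [Finset.sum_range_succ']
  simp only [Nat.cast_zero, zero_mul, mul_zero, add_zero]
  unfold HR
  simp only [Nat.add_sub_cancel]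
  rw [Finset.mul_sum, Finset.mul_sum, Finset.mul_sum]
  apply Finset.sum_congr rfl
  intro j hj
  have hjm : j < m + 1 := Finset.mem_range.mp hj
  -- expansions
  have e1 : poch β (m + 1) = poch β m * (β + m) := poch_succ β m
  have e2 : poch (α + 1) (m + 1) = (α + 1) * poch (α + 1 + 1) m := poch_succ' _ m
  have e3 : poch (-((m + 1 : ℕ) : ℝ)) (j + 1) = (-((m + 1 : ℕ) : ℝ)) * poch (-(m : ℝ)) j := by
    rw [poch_succ']
    congr 2
    push_cast; ring
  have e4 : poch (α + 1) (j + 1) = (α + 1) * poch (α + 1 + 1) j := poch_succ' _ j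
  have e5 : poch (1 - β - ((m + 1 : ℕ) : ℝ)) (j + 1)
      = (1 - β - ((m + 1 : ℕ) : ℝ)) * poch (1 - β - (m : ℝ)) j := by
    rw [poch_succ']
    congr 2
    push_cast; ring
  -- nonvanishing
  have h1 : (α + 1 : ℝ) ≠ 0 := by have := hα 0 (by omega); simpa using this
  have h2 : poch (α + 1 + 1) m ≠ 0 := by
    apply poch_ne_zero
    intro i hi
    have := hα (i + 1) (by omega)
    push_cast at this ⊢
    convert this using 1
    ring
  have h3 : poch (1 - β - (m : ℝ)) j ≠ 0 := by
    apply poch_ne_zero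
    intro i hi
    have := hd' i (by omega)
    push_cast at this ⊢
    convert this using 2
    ring
  have h4 : (1 - β - ((m + 1 : ℕ) : ℝ)) ≠ 0 := by
    have := hd 0 (by omega); simpa using this
  have h5 : ((j.factorial : ℝ)) ≠ 0 := Nat.cast_ne_zero.mpr j.factorial_ne_zero
  have h6 : ((j : ℝ) + 1) ≠ 0 := by positivity
  have hfac : (((j + 1).factorial : ℝ)) = ((j : ℝ) + 1) * (j.factorial : ℝ) := by
    rw [Nat.factorial_succ]; push_cast; ring
  rw [e1, e2, e3, e4, e5, hfac]
  have hc : ((m + 1 : ℕ) : ℝ) = (m : ℝ) + 1 := by push_cast; ring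
  rw [hc] at h4 ⊢
  push_cast
  field_simp
  ring
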